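/- Let T be a well-separated tree metric and s_r the r-simplification map on letters. Then for any two letters l₁, l₂: d(s_r(l₁), s_r(l₂)) ≤ d(l₁, l₂), and d(l₁, l₂) ≤ d(s_r(l₁), s_r(l₂)) + r/4. -/
import Mathlib


/-- `xb` is an expansion of `x`: each letter of `x` is duplicated in place a positive
number of times. -/
def IsExpansion {α : Type*} (x xb : List α) : Prop :=
  ∃ ks : List ℕ, ks.length = x.length ∧ (∀ k ∈ ks, 0 < k) ∧
    xb = (List.zipWith (fun a k => List.replicate k a) x ks).flatten

/-- `(xb, yb)` is a correspondence between `x` and `y`: a pair of equal-length expansions. -/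
def IsCorrespondence {α : Type*} (x y xb yb : List α) : Prop :=
  IsExpansion x xb ∧ IsExpansion y yb ∧ xb.length = yb.length

/-- The cost of a correspondence: summed distances of aligned letters. -/
noncomputable def corrCost {α : Type*} (δ : α → α → ℝ) (xb yb : List α) : ℝ :=
  (List.zipWith δ xb yb).sum

/-- Dynamic time warping distance with respect to a distance function `δ`. -/
noncomputable def dtw {α : Type*} (δ : α → α → ℝ) (x y : List α) : ℝ :=
  sInf {c | ∃ xb yb, IsCorrespondence x y xb yb ∧ c = corrCost δ xb yb}

/-- Generalized Hamming distance on letters. -/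
noncomputable def hamDist {α : Type*} [DecidableEq α] (a b : α) : ℝ := if a = b then 0 else 1

/-- DTW over generalized Hamming space. -/
noncomputable def dtw0 {α : Type*} [DecidableEq α] (x y : List α) : ℝ := dtw hamDist x y

/-- A well-separated tree metric: a rooted tree on Σ with positive edge weights
(`w v` is the weight of the edge from `v` to its parent) that are non-increasing
along root-to-leaf paths. -/
structure WSTree (σ : Type*) where
  root : σ
  par : σ → σ
  w : σ → ℝ
  depth : σ → ℕ
  depth_root : depth root = 0
  root_of_depth : ∀ v, depth v = 0 → v = root
  par_root : par root = root
  depth_par : ∀ v, v ≠ root → depth (par v) + 1 = depth v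
  w_pos : ∀ v, v ≠ root → 0 < w v
  w_mono : ∀ v, v ≠ root → par v ≠ root → w v ≤ w (par v)

/-- The k-th iterated ancestor of v. -/
def WSTree.anc {σ : Type*} (T : WSTree σ) (v : σ) : ℕ → σ
  | 0 => v
  | k + 1 => T.par (T.anc v k)

/-- The maximum weight among the first k edges on the path from v towards the root. -/
noncomputable def WSTree.upMax {σ : Type*} (T : WSTree σ) (v : σ) : ℕ → ℝ
  | 0 => 0
  | k + 1 => max (T.upMax v k) (T.w (T.anc v k))

/-- The well-separated tree metric distance: the maximum edge weight on the tree path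
between u and v (minimized over common ancestors through which the path may pass). -/
noncomputable def WSTree.tdist {σ : Type*} (T : WSTree σ) (u v : σ) : ℝ :=
  sInf {c | ∃ j k, T.anc u j = T.anc v k ∧ c = max (T.upMax u j) (T.upMax v k)}

/-- The number of steps up from v to its highest ancestor reachable via edges of
weight at most r/4. -/
noncomputable def WSTree.srIdx {σ : Type*} (T : WSTree σ) (r : ℝ) (v : σ) : ℕ :=
  sSup {k | k ≤ T.depth v ∧ ∀ i < k, T.w (T.anc v i) ≤ r / 4}

/-- The r-simplification on letters: the highest ancestor of v reachable from v via
edges of weight at most r/4. -/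
noncomputable def WSTree.sr {σ : Type*} (T : WSTree σ) (r : ℝ) (v : σ) : σ :=
  T.anc v (T.srIdx r v)


namespace WSTree

variable {σ : Type*} (T : WSTree σ)

lemma anc_zero (v : σ) : T.anc v 0 = v := rfl

lemma anc_succ (v : σ) (k : ℕ) : T.anc v (k + 1) = T.par (T.anc v k) := rfl

lemma anc_succ' (v : σ) (k : ℕ) : T.anc v (k + 1) = T.anc (T.par v) k := by
  induction k with
  | zero => rfl
  | succ k ih => rw [anc_succ, ih, anc_succ]

lemma anc_add (v : σ) (m t : ℕ) : T.anc v (m + t) = T.anc (T.anc v m) t := by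
  induction t with
  | zero => rfl
  | succ t ih => rw [show m + (t+1) = (m+t)+1 by omega, anc_succ, ih, anc_succ]

lemma anc_root (n : ℕ) : T.anc T.root n = T.root := by
  induction n with
  | zero => rfl
  | succ n ih => rw [anc_succ, ih, T.par_root]

lemma anc_depth : ∀ (n : ℕ) (v : σ), T.depth v = n → T.anc v n = T.root := by
  intro n
  induction n with
  | zero => intro v h; rw [T.root_of_depth v h]; rfl
  | succ n ih =>
    intro v h
    have hv : v ≠ T.root := by
      intro e; rw [e, T.depth_root] at h; omega
    have hp := T.depth_par v hv
    rw [anc_succ']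
    exact ih _ (by omega)

lemma anc_depth_self (v : σ) : T.anc v (T.depth v) = T.root :=
  T.anc_depth _ v rfl

lemma anc_of_depth_le {v : σ} {t : ℕ} (h : T.depth v ≤ t) : T.anc v t = T.root := by
  rw [show t = T.depth v + (t - T.depth v) by omega, anc_add, anc_depth_self, anc_root]

lemma depth_anc {v : σ} : ∀ {k : ℕ}, k ≤ T.depth v → T.depth (T.anc v k) = T.depth v - k := by
  intro k
  induction k with
  | zero => intro _; simp [anc_zero]
  | succ k ih =>
    intro h
    have h1 : T.depth (T.anc v k) = T.depth v - k := ih (by omega)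
    have hne : T.anc v k ≠ T.root := by
      intro e
      rw [e, T.depth_root] at h1
      omega
    have := T.depth_par _ hne
    rw [anc_succ]
    omega

lemma anc_ne_root {v : σ} {k : ℕ} (h : k < T.depth v) : T.anc v k ≠ T.root := by
  intro e
  have := T.depth_anc (v := v) (k := k) (by omega)
  rw [e, T.depth_root] at this
  omega

lemma w_anc_le {v : σ} : ∀ {k i : ℕ}, i ≤ k → k < T.depth v →
    T.w (T.anc v i) ≤ T.w (T.anc v k) := by
  intro k
  induction k with
  | zero =>
    intro i hi _
    have : i = 0 := by omega
    rw [this]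
  | succ k ih =>
    intro i hi hk
    rcases Nat.eq_or_lt_of_le hi with h | h
    · rw [h]
    · have h1 : T.w (T.anc v i) ≤ T.w (T.anc v k) := ih (by omega) (by omega)
      have h2 : T.w (T.anc v k) ≤ T.w (T.anc v (k+1)) := by
        rw [anc_succ]
        exact T.w_mono _ (T.anc_ne_root (by omega))
          (by rw [← anc_succ]; exact T.anc_ne_root hk)
      exact h1.trans h2

lemma upMax_zero (v : σ) : T.upMax v 0 = 0 := rfl

lemma upMax_succ (v : σ) (k : ℕ) :
    T.upMax v (k + 1) = max (T.upMax v k) (T.w (T.anc v k)) := rfl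

lemma upMax_nonneg (v : σ) (k : ℕ) : 0 ≤ T.upMax v k := by
  induction k with
  | zero => exact le_refl 0
  | succ k ih => exact ih.trans (le_max_left _ _)

lemma upMax_add (v : σ) (m t : ℕ) :
    T.upMax v (m + t) = max (T.upMax v m) (T.upMax (T.anc v m) t) := by
  induction t with
  | zero => simp [upMax_zero, upMax_nonneg]
  | succ t ih =>
    rw [show m + (t+1) = (m+t)+1 by omega, upMax_succ, ih, upMax_succ, max_assoc,
      ← anc_add]

lemma upMax_le {v : σ} {B : ℝ} (hB : 0 ≤ B) :
    ∀ {k : ℕ}, (∀ i < k, T.w (T.anc v i) ≤ B) → T.upMax v k ≤ B := by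
  intro k
  induction k with
  | zero => intro _; exact hB
  | succ k ih =>
    intro h
    rw [upMax_succ]
    exact max_le (ih fun i hi => h i (by omega)) (h k (by omega))

lemma srIdx_mem (r : ℝ) (v : σ) :
    T.srIdx r v ≤ T.depth v ∧ ∀ i < T.srIdx r v, T.w (T.anc v i) ≤ r / 4 := by
  have h : T.srIdx r v ∈ {k | k ≤ T.depth v ∧ ∀ i < k, T.w (T.anc v i) ≤ r / 4} :=
    Nat.sSup_mem ⟨0, by simp⟩ ⟨T.depth v, fun k hk => hk.1⟩
  exact h

lemma le_srIdx {r : ℝ} {v : σ} {k : ℕ} (h1 : k ≤ T.depth v)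
    (h2 : ∀ i < k, T.w (T.anc v i) ≤ r / 4) : k ≤ T.srIdx r v :=
  le_csSup ⟨T.depth v, fun k hk => hk.1⟩ ⟨h1, h2⟩

lemma srIdx_cross {r : ℝ} {u v : σ} {j k : ℕ} (hjk : T.anc u j = T.anc v k)
    (hj : j < T.srIdx r u) : k < T.srIdx r v := by
  obtain ⟨hmu, hwu⟩ := T.srIdx_mem r u
  have hju : j < T.depth u := lt_of_lt_of_le hj hmu
  have hne : T.anc u j ≠ T.root := T.anc_ne_root hju
  have hk : k < T.depth v := by
    by_contra h
    push_neg at h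
    exact hne (hjk ▸ T.anc_of_depth_le h)
  have hw : T.w (T.anc v k) ≤ r / 4 := by
    rw [← hjk]; exact hwu j hj
  have hall : ∀ i < k + 1, T.w (T.anc v i) ≤ r / 4 := fun i hi =>
    (T.w_anc_le (by omega) hk).trans hw
  exact lt_of_lt_of_le (Nat.lt_succ_self k) (T.le_srIdx hk hall)

lemma sr_anc {r : ℝ} {v : σ} {j : ℕ} (hj : j ≤ T.srIdx r v) :
    T.sr r (T.anc v j) = T.sr r v := by
  obtain ⟨hm, hw⟩ := T.srIdx_mem r v
  have hjd : j ≤ T.depth v := hj.trans hm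
  have hd : T.depth (T.anc v j) = T.depth v - j := T.depth_anc hjd
  have hidx : T.srIdx r (T.anc v j) = T.srIdx r v - j := by
    apply le_antisymm
    · apply csSup_le ⟨0, by simp⟩
      rintro k ⟨hk1, hk2⟩
      have hjk : j + k ≤ T.srIdx r v := by
        apply T.le_srIdx (by omega)
        intro i hi
        rcases lt_or_ge i j with h | h
        · exact hw i (lt_of_lt_of_le h hj)
        · have e : T.anc v i = T.anc (T.anc v j) (i - j) := by
            rw [← anc_add]; congr 1; omega
          rw [e]; exact hk2 _ (by omega)
      omega
    · apply T.le_srIdx (by omega)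
      intro i hi
      rw [← anc_add]
      exact hw (j + i) (by omega)
  show T.anc (T.anc v j) (T.srIdx r (T.anc v j)) = T.anc v (T.srIdx r v)
  rw [hidx, ← anc_add]
  congr 1
  omega

lemma tdist_bddBelow (u v : σ) : BddBelow
    {c | ∃ j k, T.anc u j = T.anc v k ∧ c = max (T.upMax u j) (T.upMax v k)} := by
  refine ⟨0, ?_⟩
  rintro c ⟨j, k, _, rfl⟩
  exact le_max_of_le_left (T.upMax_nonneg u j)

lemma tdist_nonempty (u v : σ) : Set.Nonempty
    {c | ∃ j k, T.anc u j = T.anc v k ∧ c = max (T.upMax u j) (T.upMax v k)} :=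
  ⟨_, T.depth u, T.depth v, by rw [anc_depth_self, anc_depth_self], rfl⟩

lemma tdist_le (u v : σ) (j k : ℕ) (h : T.anc u j = T.anc v k) :
    T.tdist u v ≤ max (T.upMax u j) (T.upMax v k) :=
  csInf_le (T.tdist_bddBelow u v) ⟨j, k, h, rfl⟩

end WSTree

/-- r-simplification does not increase distances, and decreases them by at most r/4. -/
theorem tdist_sr_bounds {σ : Type*} (T : WSTree σ) (r : ℝ) (hr : 1 ≤ r) (l1 l2 : σ) :
    T.tdist (T.sr r l1) (T.sr r l2) ≤ T.tdist l1 l2 ∧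
      T.tdist l1 l2 ≤ T.tdist (T.sr r l1) (T.sr r l2) + r / 4 := by
  obtain ⟨hm1, hw1⟩ := T.srIdx_mem r l1
  obtain ⟨hm2, hw2⟩ := T.srIdx_mem r l2
  set m1 := T.srIdx r l1 with hm1d
  set m2 := T.srIdx r l2 with hm2d
  have h14 : (0:ℝ) ≤ r / 4 := by linarith
  constructor
  · apply le_csInf (T.tdist_nonempty l1 l2)
    rintro c ⟨j, k, hjk, rfl⟩
    by_cases hj : j < m1
    · have hk : k < m2 := T.srIdx_cross hjk hj
      have hss : T.sr r l1 = T.sr r l2 := by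
        rw [← T.sr_anc hj.le, hjk, T.sr_anc hk.le]
      have h0 : T.tdist (T.sr r l1) (T.sr r l2) ≤ 0 := by
        have := T.tdist_le (T.sr r l1) (T.sr r l2) 0 0 (by rw [hss])
        simpa [WSTree.upMax_zero] using this
      exact h0.trans (le_max_of_le_left (T.upMax_nonneg _ _))
    · have hk : ¬ k < m2 := fun hk => hj (T.srIdx_cross hjk.symm hk)
      push_neg at hj hk
      have e1 : T.anc (T.sr r l1) (j - m1) = T.anc l1 j := by
        show T.anc (T.anc l1 m1) (j - m1) = T.anc l1 j
        rw [← T.anc_add]; congr 1; omega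
      have e2 : T.anc (T.sr r l2) (k - m2) = T.anc l2 k := by
        show T.anc (T.anc l2 m2) (k - m2) = T.anc l2 k
        rw [← T.anc_add]; congr 1; omega
      have hle := T.tdist_le (T.sr r l1) (T.sr r l2) (j - m1) (k - m2)
        (by rw [e1, e2, hjk])
      refine hle.trans (max_le_max ?_ ?_)
      · have h := T.upMax_add l1 m1 (j - m1)
        rw [show m1 + (j - m1) = j by omega] at h
        rw [h]
        exact le_max_right _ _
      · have h := T.upMax_add l2 m2 (k - m2)
        rw [show m2 + (k - m2) = k by omega] at h
        rw [h]
        exact le_max_right _ _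
  · have key : T.tdist l1 l2 - r / 4 ≤ T.tdist (T.sr r l1) (T.sr r l2) := by
      apply le_csInf (T.tdist_nonempty _ _)
      rintro c ⟨j, k, hjk, rfl⟩
      have e1 : T.anc l1 (m1 + j) = T.anc (T.sr r l1) j := T.anc_add l1 m1 j
      have e2 : T.anc l2 (m2 + k) = T.anc (T.sr r l2) k := T.anc_add l2 m2 k
      have hle := T.tdist_le l1 l2 (m1 + j) (m2 + k) (by rw [e1, e2, hjk])
      have hb1 : T.upMax l1 m1 ≤ r / 4 := T.upMax_le h14 hw1
      have hb2 : T.upMax l2 m2 ≤ r / 4 := T.upMax_le h14 hw2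
      have ha1 : T.upMax l1 (m1 + j) =
          max (T.upMax l1 m1) (T.upMax (T.sr r l1) j) := T.upMax_add l1 m1 j
      have ha2 : T.upMax l2 (m2 + k) =
          max (T.upMax l2 m2) (T.upMax (T.sr r l2) k) := T.upMax_add l2 m2 k
      set c := max (T.upMax (T.sr r l1) j) (T.upMax (T.sr r l2) k) with hc
      have hc0 : 0 ≤ c := le_max_of_le_left (T.upMax_nonneg _ _)
      have hc1 : T.upMax (T.sr r l1) j ≤ c := le_max_left _ _
      have hc2 : T.upMax (T.sr r l2) k ≤ c := le_max_right _ _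
      have hA : T.upMax l1 (m1 + j) ≤ c + r / 4 := by
        rw [ha1]
        exact max_le (by linarith) (by linarith)
      have hB : T.upMax l2 (m2 + k) ≤ c + r / 4 := by
        rw [ha2]
        exact max_le (by linarith) (by linarith)
      have := hle.trans (max_le hA hB)
      linarith
    linarith
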